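/- Consider the optimization max over (s̃_A, s̃_1, …, s̃_n, z̃) of s̃_A + Σ_{j=1}^n s̃_j subject to s̃_j ≤ log s_j + z̃ − log(T_on + c₁ + e^{z̃}) for each j and s̃_A ≤ log q − log(T_on + c₁ + e^{z̃}), where s_j > 0, q > 0, T_on > 0, c₁ ≥ 0 are constants. At any optimum, e^{z̃*}/(T_on + c₁ + e^{z̃*}) = n/(n+1). -/

import Mathlib

/-- Strict optimality lemma: `F(u) = n log u - (n+1) log (T+u)` has a strict
global maximum at `u = n*T` on `(0, ∞)`. -/
lemma aux_strict_max (N T u : ℝ) (hN : 1 ≤ N) (hT : 0 < T) (hu : 0 < u)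
    (hne : u ≠ N * T) :
    N * Real.log u - (N + 1) * Real.log (T + u) <
      N * Real.log (N * T) - (N + 1) * Real.log (T + N * T) := by
  have hN0 : 0 < N := by linarith
  have hN1 : 0 < N + 1 := by linarith
  have hNT : 0 < N * T := by positivity
  set v : ℝ := u / (N * T) with hv
  have hv0 : 0 < v := by positivity
  have hv1 : v ≠ 1 := by
    intro h
    apply hne
    rw [hv, div_eq_one_iff_eq hNT.ne'] at h
    linarith
  have hcc := strictConcaveOn_log_Ioi.2 (Set.mem_Ioi.2 hv0)
    (Set.mem_Ioi.2 one_pos) hv1 (show (0:ℝ) < N / (N + 1) by positivity)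
    (show (0:ℝ) < 1 / (N + 1) by positivity)
    (show N / (N + 1) + 1 / (N + 1) = 1 by field_simp)
  simp only [smul_eq_mul, Real.log_one, mul_zero, add_zero, mul_one] at hcc
  -- hcc : N/(N+1) * log v < log (N/(N+1) * v + 1/(N+1))
  have hmix : N / (N + 1) * v + 1 / (N + 1) = (T + u) / (T * (N + 1)) := by
    field_simp [hv]
    have hvNT : v * (N * T) = u := by rw [hv]; exact div_mul_cancel₀ u hNT.ne'
    linear_combination hvNT
  rw [hmix] at hcc
  have hlog1 : Real.log v = Real.log u - Real.log (N * T) :=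
    Real.log_div hu.ne' hNT.ne'
  have hlog2 : Real.log ((T + u) / (T * (N + 1))) =
      Real.log (T + u) - Real.log (T + N * T) := by
    rw [Real.log_div (by positivity) (by positivity)]
    congr 1
    congr 1
    ring
  rw [hlog1, hlog2] at hcc
  have h2 := mul_lt_mul_of_pos_left hcc hN1
  have h3 : (N + 1) * (N / (N + 1) * (Real.log u - Real.log (N * T)))
      = N * (Real.log u - Real.log (N * T)) := by field_simp
  rw [h3] at h2
  nlinarith [h2]

/-- Proportional fair rate allocation: at any maximiser of
`s̃_A + ∑ s̃_j` subject to the throughput constraints, the airtime fraction of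
full CSMA/CA MAC slots `exp z* / (T_on + c₁ + exp z*)` equals `n/(n+1)`. -/
theorem prop_fair_optimum_airtime
    (n : ℕ) (hn : 1 ≤ n) (s : Fin n → ℝ) (hs : ∀ j, 0 < s j)
    (q Ton c₁ : ℝ) (hq : 0 < q) (hTon : 0 < Ton) (hc₁ : 0 ≤ c₁)
    (feasible : (ℝ × (Fin n → ℝ) × ℝ) → Prop)
    (hfeas : ∀ p : ℝ × (Fin n → ℝ) × ℝ, feasible p ↔
      ((∀ j, p.2.1 j ≤ Real.log (s j) + p.2.2 -
          Real.log (Ton + c₁ + Real.exp p.2.2)) ∧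
        p.1 ≤ Real.log q - Real.log (Ton + c₁ + Real.exp p.2.2)))
    (sA : ℝ) (sc : Fin n → ℝ) (z : ℝ)
    (hopt : feasible (sA, sc, z) ∧
      ∀ p : ℝ × (Fin n → ℝ) × ℝ, feasible p →
        p.1 + ∑ j, p.2.1 j ≤ sA + ∑ j, sc j) :
    Real.exp z / (Ton + c₁ + Real.exp z) = (n : ℝ) / (n + 1) := by
  set T : ℝ := Ton + c₁ with hTdef
  have hT : 0 < T := by positivity
  set N : ℝ := (n : ℝ) with hNdef
  have hN : 1 ≤ N := by rw [hNdef]; exact_mod_cast hn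
  set L : ℝ → ℝ := fun w => Real.log (T + Real.exp w) with hL
  -- upper bound on the optimal objective from the constraints
  obtain ⟨hfeas0, hmax⟩ := hopt
  rw [hfeas _] at hfeas0
  obtain ⟨hc, hA⟩ := hfeas0
  have hsum : ∑ j, sc j ≤ (∑ j, Real.log (s j)) + N * z - N * L z := by
    calc ∑ j, sc j ≤ ∑ j, (Real.log (s j) + z - L z) :=
          Finset.sum_le_sum fun j _ => hc j
      _ = (∑ j, Real.log (s j)) + N * z - N * L z := by
          simp [Finset.sum_add_distrib, sub_eq_add_neg, Finset.sum_const,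
            Finset.card_univ, hNdef] <;> ring
  -- lower bound: for each z', the tight point is feasible
  have key : ∀ z', N * z' - (N + 1) * L z' ≤ N * z - (N + 1) * L z := by
    intro z'
    have hfeas' : feasible (Real.log q - L z',
        (fun j => Real.log (s j) + z' - L z'), z') := by
      rw [hfeas]
      exact ⟨fun j => le_refl _, le_refl _⟩
    have hobj := hmax _ hfeas'
    simp only at hobj
    have hsum' : ∑ j, (Real.log (s j) + z' - L z')
        = (∑ j, Real.log (s j)) + N * z' - N * L z' := by
      simp [Finset.sum_add_distrib, sub_eq_add_neg, Finset.sum_const,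
        Finset.card_univ, hNdef] <;> ring
    rw [hsum'] at hobj
    linarith
  -- apply at z' = log (N*T)
  have hNT : 0 < N * T := by positivity
  have hkey := key (Real.log (N * T))
  rw [show L (Real.log (N * T)) = Real.log (T + N * T) by
    simp [hL, Real.exp_log hNT]] at hkey
  have hu : 0 < Real.exp z := Real.exp_pos z
  have heq : Real.exp z = N * T := by
    by_contra hne
    have := aux_strict_max N T (Real.exp z) hN hT hu hne
    rw [Real.log_exp] at this
    simp only [hL] at hkey
    linarith
  rw [heq]
  rw [div_eq_div_iff (by positivity) (by positivity)]
  ring
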